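/- Let d be an odd prime. Each Wootters–Fields basis {|ĵ_k⟩}_j is unbiased with respect to the standard basis: |⟨m|ĵ_k⟩|² = 1/d for all m, j, k ∈ {0,...,d−1}. Consequently, the standard basis together with the d Wootters–Fields bases forms a complete set of d+1 mutually unbiased bases of ℂ^d. -/

import Mathlib

/-- The Wootters–Fields basis vector `|ĵ_k⟩ = (1/√d) ∑_m ω^(jm+km²) |m⟩` in `ℂ^d`. -/
noncomputable def wfVec (d : ℕ) (k j : Fin d) : EuclideanSpace ℂ (Fin d) :=
  WithLp.toLp 2 (fun m : Fin d => ((1 / Real.sqrt d : ℝ) : ℂ) *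
    Complex.exp (2 * Real.pi * Complex.I *
      (((j.val * m.val + k.val * m.val ^ 2 : ℕ) : ℂ)) / d))

/-- The standard basis vector `|m⟩` of `ℂ^d`. -/
noncomputable def stdVec (d : ℕ) (m : Fin d) : EuclideanSpace ℂ (Fin d) :=
  EuclideanSpace.single m (1 : ℂ)

noncomputable def wfZeta (d : ℕ) : ℂ := Complex.exp (2 * Real.pi * Complex.I / d)

noncomputable def wfE (d : ℕ) (x : ZMod d) : ℂ := wfZeta d ^ x.val

set_option linter.unusedSectionVars false

section aux

variable {d : ℕ} (hd1 : 1 < d)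
include hd1

lemma wfZeta_prim : IsPrimitiveRoot (wfZeta d) d :=
  Complex.isPrimitiveRoot_exp d (by omega)

lemma wfZeta_pow_self : wfZeta d ^ d = 1 := (wfZeta_prim hd1).pow_eq_one

lemma wfZeta_abs : ‖wfZeta d‖ = 1 := by
  have h : (2 * Real.pi * Complex.I / d) = ((2 * Real.pi / d : ℝ) : ℂ) * Complex.I := by
    push_cast; ring
  rw [wfZeta, h, Complex.norm_exp_ofReal_mul_I]

lemma wfZeta_pow_mod (n : ℕ) : wfZeta d ^ n = wfZeta d ^ (n % d) := by
  conv_lhs => rw [← Nat.div_add_mod n d]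
  rw [pow_add, pow_mul, wfZeta_pow_self hd1, one_pow, one_mul]

lemma wfE_natCast (n : ℕ) : wfE d (n : ZMod d) = wfZeta d ^ n := by
  haveI : NeZero d := ⟨by omega⟩
  rw [wfE, ZMod.val_natCast, ← wfZeta_pow_mod hd1]

lemma wfE_zero : wfE d 0 = 1 := by
  haveI : NeZero d := ⟨by omega⟩
  simp [wfE]

lemma wfE_add (x y : ZMod d) : wfE d (x + y) = wfE d x * wfE d y := by
  haveI : NeZero d := ⟨by omega⟩
  have h : x + y = (((x.val + y.val : ℕ)) : ZMod d) := by
    push_cast [ZMod.natCast_zmod_val]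
    ring
  rw [h, wfE_natCast hd1, pow_add, ← wfE_natCast hd1, ← wfE_natCast hd1,
    ZMod.natCast_zmod_val, ZMod.natCast_zmod_val]

lemma wfE_abs (x : ZMod d) : ‖wfE d x‖ = 1 := by
  rw [wfE, norm_pow, wfZeta_abs hd1, one_pow]

lemma wfE_conj (x : ZMod d) : (starRingEnd ℂ) (wfE d x) = wfE d (-x) := by
  have h1 : wfE d x * wfE d (-x) = 1 := by
    rw [← wfE_add hd1, add_neg_cancel, wfE_zero hd1]
  rw [← Complex.inv_eq_conj (wfE_abs hd1 x)]
  exact inv_eq_of_mul_eq_one_right h1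

lemma wfE_ne_one {c : ZMod d} (hc : c ≠ 0) : wfE d c ≠ 1 := by
  haveI : NeZero d := ⟨by omega⟩
  have h0 : 0 < c.val := by
    rcases Nat.eq_zero_or_pos c.val with h | h
    · exact absurd ((ZMod.val_eq_zero c).1 h) hc
    · exact h
  exact (wfZeta_prim hd1).pow_ne_one_of_pos_of_lt h0.ne' (ZMod.val_lt c)

lemma wfE_sum [NeZero d] (c : ZMod d) :
    ∑ x : ZMod d, wfE d (c * x) = if c = 0 then (d : ℂ) else 0 := by
  by_cases hc : c = 0
  · simp [hc, wfE_zero hd1, ZMod.card]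
  · simp only [hc, if_false]
    have key : ∑ x : ZMod d, wfE d (c * x)
        = wfE d c * ∑ x : ZMod d, wfE d (c * x) := by
      conv_lhs => rw [← Fintype.sum_equiv (Equiv.addRight (1 : ZMod d))
        (fun x => wfE d (c * (x + 1))) (fun x => wfE d (c * x)) (fun x => rfl)]
      rw [Finset.mul_sum]
      refine Finset.sum_congr rfl fun x _ => ?_
      rw [mul_add, mul_one, wfE_add hd1, mul_comm]
    have hne := wfE_ne_one hd1 hc
    have h2 : (wfE d c - 1) * ∑ x : ZMod d, wfE d (c * x) = 0 := by
      rw [sub_mul, one_mul]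
      exact sub_eq_zero.2 key.symm
    rcases mul_eq_zero.1 h2 with h | h
    · exact absurd (sub_eq_zero.1 h) hne
    · exact h

/-- the Fin d ≃ ZMod d equivalence. -/
noncomputable def finZModEquiv [NeZero d] : Fin d ≃ ZMod d :=
  { toFun := fun m => ((m : ℕ) : ZMod d)
    invFun := fun x => ⟨x.val, ZMod.val_lt x⟩
    left_inv := fun m => by
      simp [ZMod.val_natCast, Nat.mod_eq_of_lt m.isLt]
    right_inv := fun x => by
      simp [ZMod.natCast_zmod_val] }

lemma wfVec_apply (k j : Fin d) (m : Fin d) :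
    wfVec d k j m = ((1 / Real.sqrt d : ℝ) : ℂ) *
      wfE d (((j.val * m.val + k.val * m.val ^ 2 : ℕ)) : ZMod d) := by
  rw [wfVec, PiLp.toLp_apply, wfE_natCast hd1, wfZeta]
  congr 1
  rw [← Complex.exp_nat_mul]
  congr 1
  ring

lemma inner_wf [NeZero d] (k j k' j' : Fin d) :
    (inner ℂ (wfVec d k j) (wfVec d k' j') : ℂ)
      = (1 / (d : ℂ)) * ∑ x : ZMod d,
          wfE d (((j'.val : ZMod d) - (j.val : ZMod d)) * x
            + ((k'.val : ZMod d) - (k.val : ZMod d)) * x ^ 2) := by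
  have hc2 : ((1 / Real.sqrt d : ℝ) : ℂ) * ((1 / Real.sqrt d : ℝ) : ℂ) = 1 / (d : ℂ) := by
    rw [← Complex.ofReal_mul]
    rw [div_mul_div_comm, one_mul, Real.mul_self_sqrt (by positivity)]
    push_cast
    ring
  rw [PiLp.inner_apply]
  calc ∑ m : Fin d, (inner ℂ (wfVec d k j m) (wfVec d k' j' m) : ℂ)
      = ∑ m : Fin d, (1 / (d : ℂ)) *
          wfE d (((j'.val : ZMod d) - (j.val : ZMod d)) * (finZModEquiv (d := d) m)
            + ((k'.val : ZMod d) - (k.val : ZMod d)) * (finZModEquiv (d := d) m) ^ 2) := by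
        refine Finset.sum_congr rfl fun m _ => ?_
        rw [RCLike.inner_apply', wfVec_apply hd1, wfVec_apply hd1, map_mul,
          Complex.conj_ofReal, wfE_conj hd1]
        have harg : -(((j.val * m.val + k.val * m.val ^ 2 : ℕ)) : ZMod d)
            + (((j'.val * m.val + k'.val * m.val ^ 2 : ℕ)) : ZMod d)
            = ((j'.val : ZMod d) - (j.val : ZMod d)) * (finZModEquiv (d := d) m)
              + ((k'.val : ZMod d) - (k.val : ZMod d)) * (finZModEquiv (d := d) m) ^ 2 := by
          show _ = _ * ((m.val : ℕ) : ZMod d) + _ * ((m.val : ℕ) : ZMod d) ^ 2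
          push_cast
          ring
        calc ((1 / Real.sqrt d : ℝ) : ℂ) * wfE d (-_) * (((1 / Real.sqrt d : ℝ) : ℂ) * wfE d _)
            = (((1 / Real.sqrt d : ℝ) : ℂ) * ((1 / Real.sqrt d : ℝ) : ℂ)) *
              (wfE d (-(((j.val * m.val + k.val * m.val ^ 2 : ℕ)) : ZMod d)) *
               wfE d (((j'.val * m.val + k'.val * m.val ^ 2 : ℕ)) : ZMod d)) := by ring
          _ = _ := by rw [hc2, ← wfE_add hd1, harg]
    _ = (1 / (d : ℂ)) * ∑ m : Fin d,
          wfE d (((j'.val : ZMod d) - (j.val : ZMod d)) * (finZModEquiv (d := d) m)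
            + ((k'.val : ZMod d) - (k.val : ZMod d)) * (finZModEquiv (d := d) m) ^ 2) := by
        rw [Finset.mul_sum]
    _ = _ := by
        rw [Equiv.sum_comp (finZModEquiv (d := d)) (fun x => wfE d
          (((j'.val : ZMod d) - (j.val : ZMod d)) * x
            + ((k'.val : ZMod d) - (k.val : ZMod d)) * x ^ 2))]

end aux

section main

variable {d : ℕ} (hd : d.Prime) (hodd : Odd d)
include hd hodd

lemma wfTwo_ne_zero' : (2 : ZMod d) ≠ 0 := by
  haveI : NeZero d := ⟨hd.ne_zero⟩
  have h2 : ((2 : ℕ) : ZMod d) = (2 : ZMod d) := by push_cast; ring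
  rw [← h2, Ne, ZMod.natCast_eq_zero_iff]
  intro hdvd
  have := Nat.le_of_dvd (by norm_num) hdvd
  have := hd.two_le
  interval_cases d
  · exact absurd hodd (by decide)

lemma sumQ_mul_conj [NeZero d] {a : ZMod d} (b : ZMod d) (ha : a ≠ 0) :
    (∑ x : ZMod d, wfE d (b * x + a * x ^ 2)) *
      (starRingEnd ℂ) (∑ x : ZMod d, wfE d (b * x + a * x ^ 2)) = (d : ℂ) := by
  haveI : Fact d.Prime := ⟨hd⟩
  have hd1 : 1 < d := hd.one_lt
  set S := ∑ x : ZMod d, wfE d (b * x + a * x ^ 2) with hS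
  have hconj : (starRingEnd ℂ) S = ∑ y : ZMod d, wfE d (-(b * y + a * y ^ 2)) := by
    rw [hS, map_sum]
    exact Finset.sum_congr rfl fun y _ => wfE_conj hd1 _
  rw [hconj, hS, Finset.sum_mul_sum]
  have step1 : ∀ x y : ZMod d,
      wfE d (b * x + a * x ^ 2) * wfE d (-(b * y + a * y ^ 2))
        = wfE d ((b * x + a * x ^ 2) + -(b * y + a * y ^ 2)) :=
    fun x y => (wfE_add hd1 _ _).symm
  calc ∑ x : ZMod d, ∑ y : ZMod d,
        wfE d (b * x + a * x ^ 2) * wfE d (-(b * y + a * y ^ 2))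
      = ∑ y : ZMod d, ∑ x : ZMod d,
        wfE d ((b * x + a * x ^ 2) + -(b * y + a * y ^ 2)) := by
        rw [Finset.sum_comm]
        exact Finset.sum_congr rfl fun y _ => Finset.sum_congr rfl fun x _ => step1 x y
    _ = ∑ y : ZMod d, ∑ h : ZMod d,
        wfE d ((b * h + a * h ^ 2) + (2 * a * h) * y) := by
        refine Finset.sum_congr rfl fun y _ => ?_
        rw [← Equiv.sum_comp (Equiv.addRight y) (fun x => wfE d
          ((b * x + a * x ^ 2) + -(b * y + a * y ^ 2)))]
        refine Finset.sum_congr rfl fun h _ => ?_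
        congr 1
        show (b * (h + y) + a * (h + y) ^ 2) + -(b * y + a * y ^ 2) = _
        ring
    _ = ∑ h : ZMod d, wfE d (b * h + a * h ^ 2) * ∑ y : ZMod d, wfE d ((2 * a * h) * y) := by
        rw [Finset.sum_comm]
        refine Finset.sum_congr rfl fun h _ => ?_
        rw [Finset.mul_sum]
        exact Finset.sum_congr rfl fun y _ => wfE_add hd1 _ _
    _ = ∑ h : ZMod d, wfE d (b * h + a * h ^ 2) * (if h = 0 then (d : ℂ) else 0) := by
        refine Finset.sum_congr rfl fun h _ => ?_
        rw [wfE_sum hd1]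
        have h2 : (2 : ZMod d) ≠ 0 := wfTwo_ne_zero' hd hodd
        have heq : (2 * a * h = 0) ↔ (h = 0) := by
          constructor
          · intro hh
            rcases mul_eq_zero.1 hh with hh | hh
            · rcases mul_eq_zero.1 hh with hh | hh
              · exact absurd hh h2
              · exact absurd hh ha
            · exact hh
          · intro hh; rw [hh, mul_zero]
        simp only [heq]
    _ = (d : ℂ) := by
        rw [Finset.sum_eq_single (0 : ZMod d)]
        · simp [wfE_zero hd1]
        · intro h _ hne
          rw [if_neg hne, mul_zero]
        · intro habs
          exact absurd (Finset.mem_univ _) habs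

end main

theorem stmt_6 (d : ℕ) (hd : d.Prime) (hodd : Odd d) :
    (∀ m j k : Fin d,
        ‖(inner ℂ (stdVec d m) (wfVec d k j) : ℂ)‖ ^ 2 = 1 / d) ∧
    Orthonormal ℂ (stdVec d) ∧
    (∀ k : Fin d, Orthonormal ℂ (wfVec d k)) ∧
    (∀ k k' : Fin d, k ≠ k' → ∀ j j' : Fin d,
        ‖(inner ℂ (wfVec d k j) (wfVec d k' j') : ℂ)‖ ^ 2 = 1 / d) := by
  have hd1 : 1 < d := hd.one_lt
  haveI : NeZero d := ⟨hd.ne_zero⟩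
  have hd0 : (0 : ℝ) < d := by exact_mod_cast hd.pos
  have hdC : (d : ℂ) ≠ 0 := by exact_mod_cast hd.ne_zero
  have hinj : ∀ j j' : Fin d, ((j.val : ZMod d) = (j'.val : ZMod d)) ↔ j = j' := by
    intro j j'
    constructor
    · intro h
      have := congrArg ZMod.val h
      rw [ZMod.val_cast_of_lt j.isLt, ZMod.val_cast_of_lt j'.isLt] at this
      exact Fin.ext this
    · rintro rfl; rfl
  refine ⟨?_, ?_, ?_, ?_⟩
  · intro m j k
    rw [stdVec, EuclideanSpace.inner_single_left, map_one, one_mul, wfVec_apply hd1,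
      norm_mul, wfE_abs hd1, mul_one, Complex.norm_real, Real.norm_eq_abs,
      abs_of_nonneg (by positivity), div_pow, one_pow, Real.sq_sqrt (le_of_lt hd0)]
  · exact EuclideanSpace.orthonormal_single
  · intro k
    rw [orthonormal_iff_ite]
    intro j j'
    rw [inner_wf hd1, sub_self]
    have hsum : ∑ x : ZMod d, wfE d (((j'.val : ZMod d) - (j.val : ZMod d)) * x + 0 * x ^ 2)
        = if ((j'.val : ZMod d) - (j.val : ZMod d)) = 0 then (d : ℂ) else 0 := by
      rw [← wfE_sum hd1]
      exact Finset.sum_congr rfl fun x _ => by rw [zero_mul, add_zero]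
    rw [hsum]
    by_cases hjj : j = j'
    · subst hjj
      rw [if_pos (sub_self _), if_pos rfl, one_div, inv_mul_cancel₀ hdC]
    · have hc : ¬(((j'.val : ZMod d) - (j.val : ZMod d)) = 0) :=
        fun h => hjj (((hinj j' j).1 (sub_eq_zero.1 h)).symm)
      rw [if_neg hc, if_neg hjj, mul_zero]
  · intro k k' hkk j j'
    rw [inner_wf hd1]
    have ha : ((k'.val : ZMod d) - (k.val : ZMod d)) ≠ 0 := by
      intro h
      exact hkk (((hinj k' k).1 (sub_eq_zero.1 h))).symm
    set S := ∑ x : ZMod d,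
        wfE d (((j'.val : ZMod d) - (j.val : ZMod d)) * x
          + ((k'.val : ZMod d) - (k.val : ZMod d)) * x ^ 2) with hSdef
    have hSc : S * (starRingEnd ℂ) S = (d : ℂ) :=
      sumQ_mul_conj hd hodd _ ha
    have habs : ‖S‖ ^ 2 = (d : ℝ) := by
      rw [Complex.sq_norm]
      have := hSc
      rw [Complex.mul_conj] at this
      exact_mod_cast this
    rw [norm_mul, mul_pow, habs, norm_div, norm_one, Complex.norm_natCast,
      div_pow, one_pow]
    field_simp
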